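/- arXiv:1409.7240 — 3 statements merged into one kernel-verified Lean document; each statement's English description precedes it below -/
import Mathlib

section
/- Let V be a finite set of n vertices and let G_0, G_1, …, G_m be simple graphs on V such that for each i < m, G_{i+1} is obtained from G_i by deleting a single edge e_i = {u_i, w_i} of G_i. Let B be the set of indices i < m for which e_i is a bridge of G_i. Then the sum over all i ∈ B of min(|comp_{G_{i+1}}(u_i)|, |comp_{G_{i+1}}(w_i)|) is at most n · log₂ n. -/
section Stmt3Aux

set_option linter.unusedSectionVars false

open SimpleGraph Real

variable {V : Type*} [Fintype V]

noncomputable def cc (G : SimpleGraph V) (v : V) : ℕ := {x | G.Reachable v x}.ncard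

lemma cc_pos (G : SimpleGraph V) (v : V) : 0 < cc G v :=
  (Set.ncard_pos (Set.toFinite _)).mpr ⟨v, SimpleGraph.Reachable.refl v⟩

noncomputable def phi (G : SimpleGraph V) : ℝ := ∑ v : V, Real.logb 2 (cc G v)

lemma cc_le_card (G : SimpleGraph V) (v : V) : cc G v ≤ Fintype.card V := by
  have := Set.ncard_le_ncard (Set.subset_univ {x | G.Reachable v x}) Set.finite_univ
  simpa [Set.ncard_univ, cc] using this



lemma phi_nonneg (G : SimpleGraph V) : 0 ≤ phi G :=
  Finset.sum_nonneg fun v _ => Real.logb_nonneg one_lt_two (by exact_mod_cast cc_pos G v)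

lemma phi_le (G : SimpleGraph V) : phi G ≤ Fintype.card V * Real.logb 2 (Fintype.card V) := by
  have h : ∀ v ∈ Finset.univ, Real.logb 2 (cc G v) ≤ Real.logb 2 (Fintype.card V) := by
    intro v _
    apply Real.logb_le_logb_of_le one_lt_two (by exact_mod_cast cc_pos G v)
    exact_mod_cast cc_le_card G v
  calc phi G ≤ Finset.univ.card • Real.logb 2 (Fintype.card V) :=
        Finset.sum_le_card_nsmul _ _ _ h
    _ = Fintype.card V * Real.logb 2 (Fintype.card V) := by
        simp [Finset.card_univ, nsmul_eq_mul]


lemma cc_mono {G G' : SimpleGraph V} (h : G' ≤ G) (v : V) : cc G' v ≤ cc G v :=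
  Set.ncard_le_ncard (fun _ hx => hx.mono h) (Set.toFinite _)

lemma reach_delete_cases {G : SimpleGraph V} {u w x y : V}
    (h : G.Reachable x y) :
    (G.deleteEdges {s(u,w)}).Reachable x y ∨
    ((G.deleteEdges {s(u,w)}).Reachable x u ∧ (G.deleteEdges {s(u,w)}).Reachable w y) ∨
    ((G.deleteEdges {s(u,w)}).Reachable x w ∧ (G.deleteEdges {s(u,w)}).Reachable u y) := by
  set G' := G.deleteEdges {s(u,w)} with hG'
  obtain ⟨p⟩ := h
  induction p with
  | nil => exact Or.inl (Reachable.refl _)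
  | @cons a b c hab p ih =>
    by_cases he : s(a, b) = s(u, w)
    · rw [Sym2.eq_iff] at he
      rcases he with ⟨rfl, rfl⟩ | ⟨rfl, rfl⟩
      · -- a = u, b = w
        rcases ih with h1 | ⟨h1, h2⟩ | ⟨h1, h2⟩
        · exact Or.inr (Or.inl ⟨Reachable.refl _, h1⟩)
        · exact Or.inl (h1.symm.trans h2)
        · exact Or.inl h2
      · -- a = w, b = u
        rcases ih with h1 | ⟨h1, h2⟩ | ⟨h1, h2⟩
        · exact Or.inr (Or.inr ⟨Reachable.refl _, h1⟩)
        · exact Or.inl h2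
        · exact Or.inl (h1.symm.trans h2)
    · have hab' : G'.Reachable a b := by
        refine SimpleGraph.Adj.reachable ?_
        rw [hG', SimpleGraph.deleteEdges_adj]
        exact ⟨hab, by simpa using he⟩
      rcases ih with h1 | ⟨h1, h2⟩ | ⟨h1, h2⟩
      · exact Or.inl (hab'.trans h1)
      · exact Or.inr (Or.inl ⟨hab'.trans h1, h2⟩)
      · exact Or.inr (Or.inr ⟨hab'.trans h1, h2⟩)

lemma phi_mono {G G' : SimpleGraph V} (h : G' ≤ G) : phi G' ≤ phi G := by
  apply Finset.sum_le_sum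
  intro v _
  apply Real.logb_le_logb_of_le one_lt_two (by exact_mod_cast cc_pos G' v)
  exact_mod_cast cc_mono h v


lemma bridge_drop_aux {G : SimpleGraph V} {u w : V} (hadj : G.Adj u w)
    (hnr : ¬ (G.deleteEdges {s(u,w)}).Reachable u w)
    (hab : cc (G.deleteEdges {s(u,w)}) u ≤ cc (G.deleteEdges {s(u,w)}) w) :
    (cc (G.deleteEdges {s(u,w)}) u : ℝ) ≤ phi G - phi (G.deleteEdges {s(u,w)}) := by
  classical
  set G' := G.deleteEdges {s(u,w)} with hG'
  have hle : G' ≤ G := SimpleGraph.deleteEdges_le _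
  set A : Set V := {x | G'.Reachable u x} with hA
  set Bs : Set V := {x | G'.Reachable w x} with hBs
  set a := cc G' u with ha
  set b := cc G' w with hb
  have haA : a = A.ncard := rfl
  have hbB : b = Bs.ncard := rfl
  have hdisj : Disjoint A Bs := by
    rw [Set.disjoint_left]
    intro x hx1 hx2
    exact hnr (hx1.trans hx2.symm)
  -- components in G' of elements of A
  have hA' : ∀ v ∈ A, {x | G'.Reachable v x} = A := by
    intro v hv
    ext x
    simp only [hA, Set.mem_setOf_eq]
    exact ⟨fun h => hv.trans h, fun h => hv.symm.trans h⟩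
  -- components in G of elements of A
  have hAG : ∀ v ∈ A, {x | G.Reachable v x} = A ∪ Bs := by
    intro v hv
    ext x
    simp only [Set.mem_setOf_eq, Set.mem_union, hA, hBs]
    constructor
    · intro h
      rcases reach_delete_cases (u := u) (w := w) h with h1 | ⟨h1, h2⟩ | ⟨h1, h2⟩
      · exact Or.inl (hv.trans h1)
      · exact Or.inr h2
      · exact absurd (hv.trans h1) hnr
    · rintro (h | h)
      · exact ((hv.symm.trans h).mono hle)
      · exact ((hv.symm.mono hle).trans ((hadj.reachable).trans (h.mono hle)))
  have hBG : ∀ v ∈ Bs, {x | G.Reachable v x} = A ∪ Bs := by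
    intro v hv
    ext x
    simp only [Set.mem_setOf_eq, Set.mem_union, hA, hBs]
    constructor
    · intro h
      rcases reach_delete_cases (u := u) (w := w) h with h1 | ⟨h1, h2⟩ | ⟨h1, h2⟩
      · exact Or.inr (hv.trans h1)
      · exact absurd (hv.trans h1).symm hnr
      · exact Or.inl h2
    · rintro (h | h)
      · exact ((hv.symm.mono hle).trans ((hadj.symm.reachable).trans (h.mono hle)))
      · exact ((hv.symm.trans h).mono hle)
  have hcard : (A ∪ Bs).ncard = a + b :=
    Set.ncard_union_eq hdisj (Set.toFinite _) (Set.toFinite _)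
  -- cc values
  have hccA : ∀ v ∈ A, cc G v = a + b := fun v hv => by
    rw [cc, hAG v hv, hcard]
  have hccA' : ∀ v ∈ A, cc G' v = a := fun v hv => by
    rw [cc, hA' v hv, haA]
  -- key log inequality
  have hapos : (0:ℝ) < a := by exact_mod_cast cc_pos G' u
  have h1le : (1:ℝ) ≤ Real.logb 2 (a + b) - Real.logb 2 a := by
    have h2a : (2:ℝ) * a ≤ (a:ℝ) + b := by
      have : (a:ℝ) ≤ b := by exact_mod_cast hab
      linarith
    have := Real.logb_le_logb_of_le (one_lt_two) (by positivity) h2a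
    rw [Real.logb_mul (by norm_num) (ne_of_gt hapos), Real.logb_self_eq_one (by norm_num)] at this
    linarith
  -- sum computation
  have hsplit : phi G - phi G' = ∑ v : V, (Real.logb 2 (cc G v) - Real.logb 2 (cc G' v)) := by
    rw [phi, phi, Finset.sum_sub_distrib]
  rw [hsplit]
  have hterm_nonneg : ∀ v ∈ Finset.univ, v ∉ A.toFinset →
      0 ≤ Real.logb 2 (cc G v) - Real.logb 2 (cc G' v) := by
    intro v _ _
    have h1 : (0:ℝ) < (cc G' v : ℝ) := by exact_mod_cast cc_pos G' v
    have h2 : ((cc G' v : ℕ) : ℝ) ≤ ((cc G v : ℕ) : ℝ) := by exact_mod_cast cc_mono hle v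
    have := Real.logb_le_logb_of_le (one_lt_two) h1 h2
    linarith
  have hsub : ∑ v ∈ A.toFinset, (Real.logb 2 (cc G v) - Real.logb 2 (cc G' v)) ≤
      ∑ v : V, (Real.logb 2 (cc G v) - Real.logb 2 (cc G' v)) :=
    Finset.sum_le_sum_of_subset_of_nonneg (Finset.subset_univ _) hterm_nonneg
  refine le_trans ?_ hsub
  have hconst : ∑ v ∈ A.toFinset, (Real.logb 2 (cc G v) - Real.logb 2 (cc G' v)) =
      a * (Real.logb 2 (a + b) - Real.logb 2 a) := by
    have e1 : ∀ v ∈ A.toFinset, Real.logb 2 (cc G v) - Real.logb 2 (cc G' v) =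
        Real.logb 2 ((a:ℝ) + (b:ℝ)) - Real.logb 2 (a:ℝ) := by
      intro v hv
      rw [hccA v (Set.mem_toFinset.mp hv), hccA' v (Set.mem_toFinset.mp hv)]
      push_cast
      ring
    rw [Finset.sum_congr rfl e1]
    rw [Finset.sum_const, haA, Set.ncard_eq_toFinset_card']
    push_cast
    ring
  rw [hconst]
  nlinarith

lemma bridge_drop {G : SimpleGraph V} {u w : V} (hadj : G.Adj u w)
    (hnr : ¬ (G.deleteEdges {s(u,w)}).Reachable u w) :
    (min (cc (G.deleteEdges {s(u,w)}) u) (cc (G.deleteEdges {s(u,w)}) w) : ℝ) ≤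
      phi G - phi (G.deleteEdges {s(u,w)}) := by
  rcases le_total (cc (G.deleteEdges {s(u,w)}) u) (cc (G.deleteEdges {s(u,w)}) w) with h | h
  · have hm : (min (cc (G.deleteEdges {s(u,w)}) u) (cc (G.deleteEdges {s(u,w)}) w) : ℝ)
        = (cc (G.deleteEdges {s(u,w)}) u : ℝ) := by
      rw [min_def]; simp [h]
    rw [hm]
    exact bridge_drop_aux hadj hnr h
  · have hm : (min (cc (G.deleteEdges {s(u,w)}) u) (cc (G.deleteEdges {s(u,w)}) w) : ℝ)
        = (cc (G.deleteEdges {s(u,w)}) w : ℝ) := by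
      rw [min_def]
      rcases eq_or_lt_of_le h with h' | h'
      · simp [h']
      · simp [Nat.not_le.mpr h', Nat.le_of_lt h']
    rw [hm]
    have hswap : (s(w,u) : Sym2 V) = s(u,w) := Sym2.eq_swap
    have := bridge_drop_aux (u := w) (w := u) hadj.symm
      (by rw [hswap]; exact fun hr => hnr hr.symm) (by rw [hswap]; exact h)
    rwa [hswap] at this


end Stmt3Aux

/-- Let `G 0, G 1, …, G m` be simple graphs on a finite vertex set of
size `n`, where `G (i+1)` is obtained from `G i` by deleting the edge
`e i = s(u i, w i)`.  Let `B` be the set of indices `i < m` such that `e i` is a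
bridge of `G i` (i.e. `u i` and `w i` are not connected in `G (i+1) = G i − e i`).
Then `∑ i ∈ B, min |comp_{G (i+1)}(u i)| |comp_{G (i+1)}(w i)| ≤ n · log₂ n`. -/
theorem stmt3 {V : Type*} [Fintype V] (n m : ℕ) (hn : Fintype.card V = n)
    (G : ℕ → SimpleGraph V) (u w : ℕ → V)
    (hdel : ∀ i < m, (G i).Adj (u i) (w i) ∧
      G (i + 1) = (G i).deleteEdges {s(u i, w i)})
    (B : Finset ℕ)
    (hB : ∀ i, i ∈ B ↔ i < m ∧ ¬ (G (i + 1)).Reachable (u i) (w i)) :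
    ((∑ i ∈ B, min {x | (G (i + 1)).Reachable (u i) x}.ncard
        {x | (G (i + 1)).Reachable (w i) x}.ncard : ℕ) : ℝ) ≤
      n * Real.logb 2 n := by
  classical
  -- f i : the natural-number summand
  set f : ℕ → ℕ := fun i => min (cc (G (i+1)) (u i)) (cc (G (i+1)) (w i)) with hf
  have hBsub : B ⊆ Finset.range m := fun i hi => Finset.mem_range.mpr ((hB i).mp hi).1
  have key : ∀ i ∈ Finset.range m,
      (if i ∈ B then (f i : ℝ) else 0) ≤ phi (G i) - phi (G (i+1)) := by
    intro i hi
    have him := Finset.mem_range.mp hi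
    obtain ⟨hadj, hGd⟩ := hdel i him
    by_cases hiB : i ∈ B
    · rw [if_pos hiB]
      have hnr := ((hB i).mp hiB).2
      rw [hGd] at hnr ⊢
      have hb2 := bridge_drop hadj hnr
      simp only [hf]
      push_cast
      rw [hGd]
      exact hb2
    · rw [if_neg hiB]
      have : phi (G (i+1)) ≤ phi (G i) := by
        rw [hGd]; exact phi_mono (SimpleGraph.deleteEdges_le _)
      linarith
  have hsum : ∑ i ∈ B, (f i : ℝ) = ∑ i ∈ Finset.range m, (if i ∈ B then (f i : ℝ) else 0) := by
    rw [Finset.sum_ite_mem, Finset.inter_eq_right.mpr hBsub]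
  have htel : ∑ i ∈ Finset.range m, (phi (G i) - phi (G (i+1))) = phi (G 0) - phi (G m) :=
    Finset.sum_range_sub' (fun i => phi (G i)) m
  have h1 : ∑ i ∈ B, (f i : ℝ) ≤ phi (G 0) - phi (G m) := by
    rw [hsum, ← htel]
    exact Finset.sum_le_sum key
  have h2 : phi (G 0) ≤ (n : ℝ) * Real.logb 2 n := by
    have := phi_le (G 0)
    rwa [hn] at this
  have h3 : 0 ≤ phi (G m) := phi_nonneg (G m)
  have hcast : ((∑ i ∈ B, min {x | (G (i + 1)).Reachable (u i) x}.ncard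
        {x | (G (i + 1)).Reachable (w i) x}.ncard : ℕ) : ℝ) = ∑ i ∈ B, (f i : ℝ) := by
    simp only [hf, cc]
    push_cast
    rfl
  rw [hcast]
  linarith
end

section
/- Let G be a finite simple graph whose edge set is partitioned into regions E_1, …, E_k, let V_s be a skeleton set (a set of vertices containing every boundary vertex of the partition), and let G_s be the associated skeleton graph. Then for any two vertices u, w ∈ V_s, u and w are connected in G_s if and only if u and w are connected in G. -/
/-- The region graph `R_i`: the graph on the full vertex set `V` whose edges are the
edges of the part `E i`. -/
def regG {V : Type*} {k : ℕ} (E : Fin k → Set (Sym2 V)) (i : Fin k) : SimpleGraph V :=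
  SimpleGraph.fromEdgeSet (E i)

/-- The vertex type of the skeleton graph: skeleton vertices (elements of `Vs`)
together with one auxiliary vertex for each pair `(i, group)`, a group being a
nonempty equivalence class of `Vs ∩ V(R i)` under connectivity in `R i` (encoded by
the connected component of `R i` containing the group). -/
def SkelV {V : Type*} {k : ℕ} (E : Fin k → Set (Sym2 V)) (Vs : Set V) : Type _ :=
  {x : V ⊕ (Σ i : Fin k, (regG E i).ConnectedComponent) //
    Sum.elim (· ∈ Vs)
      (fun p => ∃ v ∈ Vs, v ∈ (regG E p.1).support ∧
        (regG E p.1).connectedComponentMk v = p.2) x}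

/-- The skeleton graph: each auxiliary vertex `(i, c)` is joined to every vertex of
its group, i.e. to every `v ∈ Vs` with `v ∈ V(R i)` lying in the component `c`
of `R i`. -/
def skelGraph {V : Type*} {k : ℕ} (E : Fin k → Set (Sym2 V)) (Vs : Set V) :
    SimpleGraph (SkelV E Vs) where
  Adj x y :=
    (∃ (v : V) (i : Fin k) (c : (regG E i).ConnectedComponent),
      x.1 = Sum.inl v ∧ y.1 = Sum.inr ⟨i, c⟩ ∧
      v ∈ (regG E i).support ∧ (regG E i).connectedComponentMk v = c) ∨
    (∃ (v : V) (i : Fin k) (c : (regG E i).ConnectedComponent),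
      y.1 = Sum.inl v ∧ x.1 = Sum.inr ⟨i, c⟩ ∧
      v ∈ (regG E i).support ∧ (regG E i).connectedComponentMk v = c)
  symm := ⟨fun x y h => h.elim Or.inr Or.inl⟩
  loopless := by
    refine ⟨?_⟩
    rintro x (⟨v, i, c, h1, h2, -, -⟩ | ⟨v, i, c, h1, h2, -, -⟩) <;>
      · rw [h1] at h2; simp at h2

section Aux

variable {V : Type*} {k : ℕ} {G : SimpleGraph V} {E : Fin k → Set (Sym2 V)} {Vs : Set V}

lemma skelGraph_adj {x y : SkelV E Vs} : (skelGraph E Vs).Adj x y ↔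
    ((∃ (v : V) (i : Fin k) (c : (regG E i).ConnectedComponent),
      x.1 = Sum.inl v ∧ y.1 = Sum.inr ⟨i, c⟩ ∧
      v ∈ (regG E i).support ∧ (regG E i).connectedComponentMk v = c) ∨
    (∃ (v : V) (i : Fin k) (c : (regG E i).ConnectedComponent),
      y.1 = Sum.inl v ∧ x.1 = Sum.inr ⟨i, c⟩ ∧
      v ∈ (regG E i).support ∧ (regG E i).connectedComponentMk v = c)) := Iff.rfl

/-- A representative vertex of `V` for each skeleton-graph vertex. -/
noncomputable def skelRep (E : Fin k → Set (Sym2 V)) (Vs : Set V) : SkelV E Vs → V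
  | ⟨Sum.inl v, _⟩ => v
  | ⟨Sum.inr _, h⟩ => h.choose

lemma skelRep_inl (v : V) (h) : skelRep E Vs ⟨Sum.inl v, h⟩ = v := rfl

lemma skelRep_spec (x : SkelV E Vs) {i : Fin k} {c : (regG E i).ConnectedComponent}
    (h : x.1 = Sum.inr ⟨i, c⟩) :
    skelRep E Vs x ∈ (regG E i).support ∧
      (regG E i).connectedComponentMk (skelRep E Vs x) = c := by
  obtain ⟨val, hx⟩ := x
  dsimp only at h
  subst h
  have hspec := (hx : ∃ v ∈ Vs, v ∈ (regG E i).support ∧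
      (regG E i).connectedComponentMk v = c).choose_spec
  exact ⟨hspec.2.1, hspec.2.2⟩

lemma skelRep_inl' (x : SkelV E Vs) {v : V} (h : x.1 = Sum.inl v) :
    skelRep E Vs x = v := by
  obtain ⟨val, hx⟩ := x
  dsimp only at h
  subst h
  rfl

lemma regG_le (hunion : ⋃ i, E i = G.edgeSet) (i : Fin k) : regG E i ≤ G := by
  intro a b hab
  rw [regG, SimpleGraph.fromEdgeSet_adj] at hab
  have : s(a, b) ∈ G.edgeSet := hunion ▸ Set.mem_iUnion.2 ⟨i, hab.1⟩
  exact this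

lemma skel_adj_rep (hunion : ⋃ i, E i = G.edgeSet) {x y : SkelV E Vs}
    (h : (skelGraph E Vs).Adj x y) :
    G.Reachable (skelRep E Vs x) (skelRep E Vs y) := by
  have key : ∀ (a b : SkelV E Vs),
      (∃ (v : V) (i : Fin k) (c : (regG E i).ConnectedComponent),
        a.1 = Sum.inl v ∧ b.1 = Sum.inr ⟨i, c⟩ ∧
        v ∈ (regG E i).support ∧ (regG E i).connectedComponentMk v = c) →
      G.Reachable (skelRep E Vs a) (skelRep E Vs b) := by
    rintro a b ⟨v, i, c, h1, h2, h3, h4⟩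
    rw [skelRep_inl' a h1]
    obtain ⟨_, hbc⟩ := skelRep_spec b h2
    have : (regG E i).Reachable v (skelRep E Vs b) :=
      SimpleGraph.ConnectedComponent.exact (by rw [h4, hbc])
    exact this.mono (regG_le hunion i)
  rcases skelGraph_adj.1 h with h | h
  · exact key _ _ h
  · exact (key _ _ h).symm

lemma skel_reachable_imp (hunion : ⋃ i, E i = G.edgeSet) {x y : SkelV E Vs}
    (h : (skelGraph E Vs).Reachable x y) :
    G.Reachable (skelRep E Vs x) (skelRep E Vs y) := by
  obtain ⟨p⟩ := h
  induction p with
  | nil => exact SimpleGraph.Reachable.refl _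
  | cons h p ih => exact (skel_adj_rep hunion h).trans ih

lemma walk_imp_skel (hunion : ⋃ i, E i = G.edgeSet)
    (hVs : ∀ v : V,
      (∃ i j, i ≠ j ∧ (∃ e ∈ E i, v ∈ e) ∧ (∃ e' ∈ E j, v ∈ e')) → v ∈ Vs) :
    ∀ {u w : V} (_ : G.Walk u w) (hw : w ∈ Vs) (i : Fin k)
      (hc : ∃ v ∈ Vs, v ∈ (regG E i).support ∧
        (regG E i).connectedComponentMk v = (regG E i).connectedComponentMk u)
      (_ : u ∈ (regG E i).support),
      (skelGraph E Vs).Reachable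
        ⟨Sum.inr ⟨i, (regG E i).connectedComponentMk u⟩, hc⟩ ⟨Sum.inl w, hw⟩ := by
  intro u w W
  induction W with
  | @nil u =>
    intro hw i hc hsup
    exact SimpleGraph.Adj.reachable
      (skelGraph_adj.2 (Or.inr ⟨u, i, _, rfl, rfl, hsup, rfl⟩))
  | @cons u x w h W ih =>
    intro hw i hc hsup
    have hedge : s(u, x) ∈ G.edgeSet := h
    rw [← hunion] at hedge
    obtain ⟨j, hj⟩ := Set.mem_iUnion.1 hedge
    have hadj : (regG E j).Adj u x := by
      rw [regG, SimpleGraph.fromEdgeSet_adj]; exact ⟨hj, h.ne⟩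
    have husupj : u ∈ (regG E j).support := ⟨x, hadj⟩
    have hxsupj : x ∈ (regG E j).support := ⟨u, hadj.symm⟩
    have hcomp : (regG E j).connectedComponentMk u = (regG E j).connectedComponentMk x :=
      SimpleGraph.ConnectedComponent.sound hadj.reachable
    by_cases hij : i = j
    · subst hij
      have hc' : ∃ v ∈ Vs, v ∈ (regG E i).support ∧
          (regG E i).connectedComponentMk v = (regG E i).connectedComponentMk x := by
        obtain ⟨v, h1, h2, h3⟩ := hc
        exact ⟨v, h1, h2, h3.trans hcomp⟩
      have heq : (⟨Sum.inr ⟨i, (regG E i).connectedComponentMk u⟩, hc⟩ : SkelV E Vs) =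
          ⟨Sum.inr ⟨i, (regG E i).connectedComponentMk x⟩, hc'⟩ :=
        Subtype.ext (congrArg (fun c => (Sum.inr ⟨i, c⟩ : V ⊕ Σ i : Fin k, (regG E i).ConnectedComponent)) hcomp)
      rw [heq]
      exact ih hw i hc' hxsupj
    · -- u is a boundary vertex
      have huVs : u ∈ Vs := by
        obtain ⟨y, hy⟩ := hsup
        replace hy : (regG E i).Adj u y := hy
        rw [regG, SimpleGraph.fromEdgeSet_adj] at hy
        exact hVs u ⟨i, j, hij, ⟨s(u, y), hy.1, Sym2.mem_mk_left u y⟩,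
          ⟨s(u, x), hj, Sym2.mem_mk_left u x⟩⟩
      have hcj : ∃ v ∈ Vs, v ∈ (regG E j).support ∧
          (regG E j).connectedComponentMk v = (regG E j).connectedComponentMk x :=
        ⟨u, huVs, husupj, hcomp⟩
      have r1 : (skelGraph E Vs).Adj
          ⟨Sum.inr ⟨i, (regG E i).connectedComponentMk u⟩, hc⟩ ⟨Sum.inl u, huVs⟩ :=
        skelGraph_adj.2 (Or.inr ⟨u, i, _, rfl, rfl, hsup, rfl⟩)
      have r2 : (skelGraph E Vs).Adj ⟨Sum.inl u, huVs⟩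
          (⟨Sum.inr ⟨j, (regG E j).connectedComponentMk x⟩, hcj⟩ : SkelV E Vs) :=
        skelGraph_adj.2 (Or.inl ⟨u, j, _, rfl, rfl, husupj, hcomp⟩)
      exact (r1.reachable.trans r2.reachable).trans (ih hw j hcj hxsupj)

end Aux

/-- Let the edge set of a finite simple graph `G` be partitioned into
regions `E 0, …, E (k-1)`, let `Vs` be a skeleton set (containing every boundary
vertex), and let `skelGraph E Vs` be the associated skeleton graph.  Then two
vertices `u, w ∈ Vs` are connected in the skeleton graph iff they are connected
in `G`. -/
theorem stmt5 {V : Type*} [Fintype V] (G : SimpleGraph V) {k : ℕ}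
    (E : Fin k → Set (Sym2 V))
    (hunion : ⋃ i, E i = G.edgeSet)
    (hdisj : ∀ i j, i ≠ j → Disjoint (E i) (E j))
    (Vs : Set V)
    (hVs : ∀ v : V,
      (∃ i j, i ≠ j ∧ (∃ e ∈ E i, v ∈ e) ∧ (∃ e' ∈ E j, v ∈ e')) → v ∈ Vs)
    (u w : V) (hu : u ∈ Vs) (hw : w ∈ Vs) :
    (skelGraph E Vs).Reachable ⟨Sum.inl u, hu⟩ ⟨Sum.inl w, hw⟩ ↔ G.Reachable u w := by
  constructor
  · intro h
    have := skel_reachable_imp hunion h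
    exact this
  · intro h
    obtain ⟨W⟩ := h
    cases W with
    | nil => exact SimpleGraph.Reachable.refl _
    | @cons u x w h W =>
      have hedge : s(u, x) ∈ G.edgeSet := h
      rw [← hunion] at hedge
      obtain ⟨j, hj⟩ := Set.mem_iUnion.1 hedge
      have hadj : (regG E j).Adj u x := by
        rw [regG, SimpleGraph.fromEdgeSet_adj]; exact ⟨hj, h.ne⟩
      have husupj : u ∈ (regG E j).support := ⟨x, hadj⟩
      have hcj : ∃ v ∈ Vs, v ∈ (regG E j).support ∧
          (regG E j).connectedComponentMk v = (regG E j).connectedComponentMk u :=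
        ⟨u, hu, husupj, rfl⟩
      have r1 : (skelGraph E Vs).Adj ⟨Sum.inl u, hu⟩
          (⟨Sum.inr ⟨j, (regG E j).connectedComponentMk u⟩, hcj⟩ : SkelV E Vs) :=
        skelGraph_adj.2 (Or.inl ⟨u, j, _, rfl, rfl, husupj, rfl⟩)
      have hcomp : (regG E j).connectedComponentMk u = (regG E j).connectedComponentMk x :=
        SimpleGraph.ConnectedComponent.sound hadj.reachable
      have hcj' : ∃ v ∈ Vs, v ∈ (regG E j).support ∧
          (regG E j).connectedComponentMk v = (regG E j).connectedComponentMk x :=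
        ⟨u, hu, husupj, hcomp⟩
      have hxsupj : x ∈ (regG E j).support := ⟨u, hadj.symm⟩
      have heq : (⟨Sum.inr ⟨j, (regG E j).connectedComponentMk u⟩, hcj⟩ : SkelV E Vs) =
          ⟨Sum.inr ⟨j, (regG E j).connectedComponentMk x⟩, hcj'⟩ :=
        Subtype.ext (congrArg (fun c => (Sum.inr ⟨j, c⟩ : V ⊕ Σ i : Fin k, (regG E i).ConnectedComponent)) hcomp)
      have := walk_imp_skel (G := G) hunion hVs W hw j hcj' hxsupj
      exact r1.reachable.trans (heq ▸ this)
end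

section
/- Let G be a finite simple graph whose edge set is partitioned into regions E_1, …, E_k, and let u, w ∈ V(R_j) for some region index j. Then u and w are connected in G if and only if at least one of the following holds: (a) there is a path from u to w in the region graph R_j that contains no boundary vertex of the partition; or (b) there exist boundary vertices b_u and b_w such that u and b_u are connected in R_j, w and b_w are connected in R_j, and b_u and b_w are connected in G. -/
/-- A boundary vertex of the region partition `E`: a vertex incident to edges of at
least two different parts. -/
def IsBoundary {V : Type*} {k : ℕ} (E : Fin k → Set (Sym2 V)) (v : V) : Prop :=
  ∃ i j, i ≠ j ∧ (∃ e ∈ E i, v ∈ e) ∧ (∃ e' ∈ E j, v ∈ e')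

open Classical in
lemma lemC {V : Type*} {G : SimpleGraph V} {k : ℕ} {E : Fin k → Set (Sym2 V)}
    (hunion : ⋃ i, E i = G.edgeSet) (j : Fin k) {w : V} :
    ∀ {u : V} (p : G.Walk u w), (∃ e ∈ E j, u ∈ e) →
      ((∀ v ∈ p.support, ¬ IsBoundary E v) ∧
        ∃ q : (regG E j).Walk u w, q.support = p.support) ∨
      (∃ b, IsBoundary E b ∧ (regG E j).Reachable u b ∧ G.Reachable b w)
  | u, SimpleGraph.Walk.nil, hinc => by
    by_cases hb : IsBoundary E u
    · exact Or.inr ⟨u, hb, SimpleGraph.Reachable.refl u, SimpleGraph.Reachable.refl u⟩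
    · refine Or.inl ⟨?_, SimpleGraph.Walk.nil, rfl⟩
      intro v hv
      simp only [SimpleGraph.Walk.support_nil, List.mem_singleton] at hv
      subst hv; exact hb
  | u, SimpleGraph.Walk.cons (v := x) h p', hinc => by
    by_cases hb : IsBoundary E u
    · exact Or.inr ⟨u, hb, SimpleGraph.Reachable.refl u, ⟨SimpleGraph.Walk.cons h p'⟩⟩
    · have hEj : s(u, x) ∈ E j := by
        have hGe : s(u, x) ∈ G.edgeSet := h
        rw [← hunion, Set.mem_iUnion] at hGe
        obtain ⟨i, hi⟩ := hGe
        by_cases hij : i = j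
        · exact hij ▸ hi
        · exact absurd ⟨j, i, fun hji => hij hji.symm, hinc,
            ⟨s(u, x), hi, Sym2.mem_mk_left u x⟩⟩ hb
      have hadj : (regG E j).Adj u x := by
        rw [regG, SimpleGraph.fromEdgeSet_adj]
        exact ⟨hEj, h.ne⟩
      have hxinc : ∃ e ∈ E j, x ∈ e := ⟨s(u, x), hEj, Sym2.mem_mk_right u x⟩
      rcases lemC hunion j p' hxinc with ⟨hnb, q', hs⟩ | ⟨b, hb', hr, hgw⟩
      · refine Or.inl ⟨?_, SimpleGraph.Walk.cons hadj q', by simp [hs]⟩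
        intro v hv
        simp only [SimpleGraph.Walk.support_cons, List.mem_cons] at hv
        rcases hv with rfl | hv
        · exact hb
        · exact hnb v hv
      · exact Or.inr ⟨b, hb', (hadj.reachable).trans hr, hgw⟩

/-- Let the edge set of a finite simple graph `G` be partitioned into
regions `E 0, …, E (k-1)`, and let `u, w ∈ V(R j)` for a region index `j`.  Then
`u` and `w` are connected in `G` iff (a) there is a path from `u` to `w` in the
region graph `R j` containing no boundary vertex, or (b) there are boundary vertices
`b_u`, `b_w` such that `u` is connected to `b_u` in `R j`, `w` is connected to `b_w`
in `R j`, and `b_u` is connected to `b_w` in `G`. -/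
theorem stmt9 {V : Type*} [Fintype V] (G : SimpleGraph V) {k : ℕ}
    (E : Fin k → Set (Sym2 V))
    (hunion : ⋃ i, E i = G.edgeSet)
    (hdisj : ∀ i j, i ≠ j → Disjoint (E i) (E j))
    (j : Fin k) (u w : V)
    (hu : u ∈ (regG E j).support) (hw : w ∈ (regG E j).support) :
    G.Reachable u w ↔
      ((∃ p : (regG E j).Walk u w, p.IsPath ∧ ∀ v ∈ p.support, ¬ IsBoundary E v) ∨
       (∃ bu bw : V, IsBoundary E bu ∧ IsBoundary E bw ∧
         (regG E j).Reachable u bu ∧ (regG E j).Reachable w bw ∧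
         G.Reachable bu bw)) := by
  have hle : regG E j ≤ G := by
    rw [regG, ← SimpleGraph.fromEdgeSet_edgeSet G]
    apply SimpleGraph.fromEdgeSet_mono
    rw [← hunion]
    exact Set.subset_iUnion E j
  have hinc : ∀ {v : V}, v ∈ (regG E j).support → ∃ e ∈ E j, v ∈ e := by
    intro v hv
    obtain ⟨x, hx⟩ := hv
    replace hx : (regG E j).Adj v x := hx
    rw [regG, SimpleGraph.fromEdgeSet_adj] at hx
    exact ⟨s(v, x), hx.1, Sym2.mem_mk_left v x⟩
  constructor
  · intro hr
    classical
    obtain ⟨p⟩ := hr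
    rcases lemC hunion j p (hinc hu) with ⟨hnb, q, hs⟩ | ⟨bu, hbu, hru, hG⟩
    · refine Or.inl ⟨q.toPath, q.toPath.2, fun v hv => hnb v ?_⟩
      rw [← hs]
      exact q.support_toPath_subset hv
    · obtain ⟨p2⟩ := hG.symm
      rcases lemC hunion j p2 (hinc hw) with ⟨hnb2, _, _⟩ | ⟨bw, hbw, hrw, hG2⟩
      · exact absurd hbu (hnb2 bu (p2.end_mem_support))
      · exact Or.inr ⟨bu, bw, hbu, hbw, hru, hrw, hG2.symm⟩
  · rintro (⟨p, _, _⟩ | ⟨bu, bw, _, _, hru, hrw, hG⟩)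
    · exact SimpleGraph.Reachable.mono hle ⟨p⟩
    · exact ((hru.mono hle).trans hG).trans (hrw.mono hle).symm
end
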